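/- Let S ⊆ ℝ^d be a nonempty closed convex set, π_S the Euclidean projection onto S, and μ > 0. Define the smoothed distance d̂_μ(z,S) = max_{‖θ‖≤1}(θ·z − h_S(θ) − (μ/2)‖θ‖²). Then the maximizing θ is: θ = (z − π_S(z))/‖z − π_S(z)‖ if ‖z − π_S(z)‖ ≥ μ; θ = (z − π_S(z))/μ if 0 < ‖z − π_S(z)‖ < μ; and θ = 0 if z ∈ S. -/

import Mathlib

open RealInnerProductSpace

/-- The maximizer of `θ ↦ θ·z − h_S(θ) − (μ/2)‖θ‖²` over the unit Euclidean ball is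
`(z − π_S(z))/‖z − π_S(z)‖` if `‖z − π_S(z)‖ ≥ μ`, `(z − π_S(z))/μ` if
`0 < ‖z − π_S(z)‖ < μ`, and `0` if `z ∈ S` (the latter two cases combine into
`(z − π_S(z))/μ`). -/
theorem stmt_12 (d : ℕ) (μ : ℝ) (hμ : 0 < μ)
    (S : Set (EuclideanSpace ℝ (Fin d)))
    (hSne : S.Nonempty) (hSclosed : IsClosed S) (hSconv : Convex ℝ S)
    (π : EuclideanSpace ℝ (Fin d) → EuclideanSpace ℝ (Fin d))
    (hπ : ∀ z, π z ∈ S ∧ ∀ s ∈ S, ‖z - π z‖ ≤ ‖z - s‖)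
    (hS : EuclideanSpace ℝ (Fin d) → ℝ)
    (hhS : ∀ θ, IsLUB ((fun s => (inner ℝ θ s : ℝ)) '' S) (hS θ))
    (z : EuclideanSpace ℝ (Fin d)) :
    IsGreatest
      ((fun θ => (inner ℝ θ z : ℝ) - hS θ - μ / 2 * ‖θ‖ ^ 2) '' {θ | ‖θ‖ ≤ 1})
      ((fun θ => (inner ℝ θ z : ℝ) - hS θ - μ / 2 * ‖θ‖ ^ 2)
        (if μ ≤ ‖z - π z‖ then ‖z - π z‖⁻¹ • (z - π z) else μ⁻¹ • (z - π z))) := by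
  obtain ⟨hpmem, hpnear⟩ := hπ z
  set p := π z with hp
  set v := z - p with hv
  set r := ‖v‖ with hr
  have hr0 : 0 ≤ r := norm_nonneg _
  -- variational inequality for the projection
  have hvar : ∀ s ∈ S, ⟪v, s⟫ ≤ ⟪v, p⟫ := by
    haveI : Nonempty S := ⟨⟨p, hpmem⟩⟩
    have hbdd : BddBelow (Set.range fun w : S => ‖z - (w : EuclideanSpace ℝ (Fin d))‖) :=
      ⟨0, by rintro x ⟨w, rfl⟩; exact norm_nonneg _⟩
    have hinf : ‖z - p‖ = ⨅ w : S, ‖z - (w : EuclideanSpace ℝ (Fin d))‖ :=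
      le_antisymm (le_ciInf fun w => hpnear w w.2) (ciInf_le hbdd ⟨p, hpmem⟩)
    intro s hs
    have h2 : ⟪z - p, s - p⟫ ≤ 0 :=
      (norm_eq_iInf_iff_real_inner_le_zero hSconv hpmem).mp hinf s hs
    rw [← hv, inner_sub_right] at h2
    linarith
  -- value of hS at nonnegative multiples of v
  have hSc : ∀ c : ℝ, 0 ≤ c → hS (c • v) = c * ⟪v, p⟫ := by
    intro c hc
    refine (hhS (c • v)).unique ⟨?_, ?_⟩
    · rintro x ⟨s, hs, rfl⟩
      simp only [real_inner_smul_left]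
      exact mul_le_mul_of_nonneg_left (hvar s hs) hc
    · intro b hb
      have hb' : (⟪c • v, p⟫ : ℝ) ≤ b := hb ⟨p, hpmem, rfl⟩
      rwa [real_inner_smul_left] at hb'
  have hvz : ⟪v, z⟫ - ⟪v, p⟫ = r ^ 2 := by
    rw [hr, ← real_inner_self_eq_norm_sq, hv, inner_sub_right]
  -- value of the objective at nonnegative multiples of v
  have hval : ∀ c : ℝ, 0 ≤ c →
      (⟪c • v, z⟫ : ℝ) - hS (c • v) - μ / 2 * ‖c • v‖ ^ 2
        = c * r ^ 2 - μ / 2 * c ^ 2 * r ^ 2 := by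
    intro c hc
    rw [hSc c hc, real_inner_smul_left, norm_smul, Real.norm_of_nonneg hc]
    have : (‖v‖ : ℝ) = r := hr.symm
    nlinarith [hvz]
  -- upper bound for any admissible θ
  have hub : ∀ θ : EuclideanSpace ℝ (Fin d), ‖θ‖ ≤ 1 →
      (⟪θ, z⟫ : ℝ) - hS θ - μ / 2 * ‖θ‖ ^ 2 ≤ ‖θ‖ * r - μ / 2 * ‖θ‖ ^ 2 := by
    intro θ hθ
    have h1 : (⟪θ, p⟫ : ℝ) ≤ hS θ := (hhS θ).1 ⟨p, hpmem, rfl⟩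
    have h2 : (⟪θ, v⟫ : ℝ) ≤ ‖θ‖ * r := real_inner_le_norm θ v
    have h3 : (⟪θ, z⟫ : ℝ) = ⟪θ, v⟫ + ⟪θ, p⟫ := by
      rw [hv, inner_sub_right]; ring
    linarith
  by_cases hc : μ ≤ r
  · -- case μ ≤ r : maximizer r⁻¹ • v with value r - μ/2
    have hrpos : 0 < r := lt_of_lt_of_le hμ hc
    rw [if_pos hc]
    have hnorm : ‖r⁻¹ • v‖ = 1 := by
      rw [norm_smul, Real.norm_of_nonneg (inv_nonneg.2 hr0), ← hr, inv_mul_cancel₀ hrpos.ne']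
    have hvalc : (⟪r⁻¹ • v, z⟫ : ℝ) - hS (r⁻¹ • v) - μ / 2 * ‖r⁻¹ • v‖ ^ 2
        = r - μ / 2 := by
      rw [hval r⁻¹ (inv_nonneg.2 hr0)]
      field_simp
    constructor
    · exact ⟨r⁻¹ • v, by simpa using hnorm.le, rfl⟩
    · rintro x ⟨θ, hθ, rfl⟩
      simp only [Set.mem_setOf_eq] at hθ
      have h1 := hub θ hθ
      have ht0 : 0 ≤ ‖θ‖ := norm_nonneg _
      have key : ‖θ‖ * r - μ / 2 * ‖θ‖ ^ 2 ≤ r - μ / 2 := by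
        nlinarith [mul_nonneg (by linarith : (0:ℝ) ≤ 1 - ‖θ‖) (by linarith : (0:ℝ) ≤ r - μ),
          mul_nonneg hμ.le (sq_nonneg (1 - ‖θ‖))]
      simp only []
      rw [hvalc]
      linarith
  · -- case r < μ : maximizer μ⁻¹ • v with value r²/(2μ)
    push_neg at hc
    rw [if_neg (not_le.2 hc)]
    have hnorm : ‖μ⁻¹ • v‖ ≤ 1 := by
      rw [norm_smul, Real.norm_of_nonneg (inv_nonneg.2 hμ.le), ← hr]
      rw [inv_mul_le_iff₀ hμ]
      linarith
    have hvalc : (⟪μ⁻¹ • v, z⟫ : ℝ) - hS (μ⁻¹ • v) - μ / 2 * ‖μ⁻¹ • v‖ ^ 2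
        = r ^ 2 / (2 * μ) := by
      rw [hval μ⁻¹ (inv_nonneg.2 hμ.le)]
      field_simp
      ring
    constructor
    · exact ⟨μ⁻¹ • v, by simpa using hnorm, rfl⟩
    · rintro x ⟨θ, hθ, rfl⟩
      simp only [Set.mem_setOf_eq] at hθ
      have h1 := hub θ hθ
      have ht0 : 0 ≤ ‖θ‖ := norm_nonneg _
      have key : ‖θ‖ * r - μ / 2 * ‖θ‖ ^ 2 ≤ r ^ 2 / (2 * μ) := by
        rw [le_div_iff₀ (by positivity : (0:ℝ) < 2 * μ)]
        nlinarith [sq_nonneg (r - μ * ‖θ‖)]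
      simp only []
      rw [hvalc]
      linarith
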